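/- Let A ∈ ℝ^{r×n} and B ∈ ℝ^{s×n} be matrices with rows A₁,…,A_r and B₁,…,B_s, and let α ∈ ℝ^r, β ∈ ℝ^s be column vectors. Then there is no vector x ∈ ℝⁿ with Ax ≥ α and Bx > β (componentwise) if and only if there exist real numbers λ₁,…,λ_r ≥ 0 and η₀,η₁,…,η_s ≥ 0 such that Σ_{i=1}^r λ_i (A_i x − α_i) + Σ_{j=1}^s η_j (B_j x − β_j) + η₀ is identically zero as a function of x ∈ ℝⁿ, and Σ_{j=0}^s η_j > 0. -/

import Mathlib

open Matrix
open Finset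
open scoped Classical

set_option linter.unusedSectionVars false
set_option maxHeartbeats 1000000

open Finset Matrix
open scoped Classical

private lemma sum_dite_subtype' {ι : Type} {M : Type*} [Fintype ι] [AddCommMonoid M]
    (p : ι → Prop) (F : Subtype p → M) :
    ∑ i, (if hp : p i then F ⟨i, hp⟩ else 0) = ∑ i : Subtype p, F i := by
  classical
  rw [← Finset.sum_filter_of_ne (p := p) (f := fun i => if hp : p i then F ⟨i, hp⟩ else 0)
      (by intro x _ hx; by_contra hp; exact hx (dif_neg hp))]
  rw [Finset.sum_subtype (p := p) _ (by simp)]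
  exact Finset.sum_congr rfl (fun a _ => by rw [dif_pos a.2])

private lemma exists_between'' {P Q : Type} [Fintype P] [Fintype Q] (f : P → ℝ) (g : Q → ℝ)
    (sP : P → Bool) (sQ : Q → Bool)
    (hcomp : ∀ p q, if sP p || sQ q then f p < g q else f p ≤ g q) :
    ∃ t : ℝ, (∀ p, if sP p then f p < t else f p ≤ t) ∧
      (∀ q, if sQ q then t < g q else t ≤ g q) := by
  classical
  rcases isEmpty_or_nonempty P with hP | hP
  · rcases isEmpty_or_nonempty Q with hQ | hQ
    · exact ⟨0, fun p => isEmptyElim p, fun q => isEmptyElim q⟩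
    · refine ⟨(Finset.univ.inf' ⟨Classical.arbitrary Q, mem_univ _⟩ g) - 1,
        fun p => isEmptyElim p, fun q => ?_⟩
      have hle : Finset.univ.inf' _ g ≤ g q := Finset.inf'_le _ (mem_univ q)
      split <;> linarith
  · rcases isEmpty_or_nonempty Q with hQ | hQ
    · refine ⟨(Finset.univ.sup' ⟨Classical.arbitrary P, mem_univ _⟩ f) + 1, fun p => ?_,
        fun q => isEmptyElim q⟩
      have hle : f p ≤ Finset.univ.sup' _ f := Finset.le_sup' _ (mem_univ p)
      split <;> linarith
    · set L := Finset.univ.sup' ⟨Classical.arbitrary P, mem_univ _⟩ f with hL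
      set U := Finset.univ.inf' ⟨Classical.arbitrary Q, mem_univ _⟩ g with hU
      obtain ⟨p0, -, hp0⟩ := Finset.exists_mem_eq_sup' ⟨Classical.arbitrary P, mem_univ _⟩ f
      obtain ⟨q0, -, hq0⟩ := Finset.exists_mem_eq_inf' ⟨Classical.arbitrary Q, mem_univ _⟩ g
      have hLU : L ≤ U := by
        have := hcomp p0 q0
        rw [hL, hU, hp0, hq0]
        split at this <;> linarith
      rcases lt_or_eq_of_le hLU with hlt | heq
      · refine ⟨(L + U) / 2, fun p => ?_, fun q => ?_⟩
        · have : f p ≤ L := Finset.le_sup' _ (mem_univ p)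
          split <;> linarith
        · have : U ≤ g q := Finset.inf'_le _ (mem_univ q)
          split <;> linarith
      · refine ⟨L, fun p => ?_, fun q => ?_⟩
        · have hfp : f p ≤ L := Finset.le_sup' _ (mem_univ p)
          split_ifs with hs
          · rcases lt_or_eq_of_le hfp with h | h
            · exact h
            · exfalso
              have := hcomp p q0
              rw [hs] at this
              simp only [Bool.true_or, if_true] at this
              rw [h, ← hq0, ← hU, ← heq] at this
              exact lt_irrefl _ this
          · exact hfp
        · have hgq : U ≤ g q := Finset.inf'_le _ (mem_univ q)
          rw [heq]
          split_ifs with hs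
          · rcases lt_or_eq_of_le hgq with h | h
            · exact h
            · exfalso
              have := hcomp p0 q
              rw [hs] at this
              simp only [Bool.or_true, if_true] at this
              rw [← h, ← hp0, ← hL] at this
              rw [heq] at this
              exact lt_irrefl _ this
          · exact hgq

section FM

variable {n : ℕ} {ι : Type} [Fintype ι]

/-- coefficient transfer for the eliminated system -/
noncomputable def FME (v : ι → Fin (n+1) → ℝ) (G : ι → ℝ) :
    {i : ι // v i 0 = 0} ⊕ ({i : ι // 0 < v i 0} × {i : ι // v i 0 < 0}) → ℝ :=
  Sum.elim (fun z => G z.1)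
    (fun pq => (v pq.1.1 0)⁻¹ * G pq.1.1 - (v pq.2.1 0)⁻¹ * G pq.2.1)

noncomputable def FMv (v : ι → Fin (n+1) → ℝ) :
    ({i : ι // v i 0 = 0} ⊕ ({i : ι // 0 < v i 0} × {i : ι // v i 0 < 0})) → Fin n → ℝ :=
  fun i' k => FME v (fun i => v i k.succ) i'

noncomputable def FMc (v : ι → Fin (n+1) → ℝ) (c : ι → ℝ) :
    {i : ι // v i 0 = 0} ⊕ ({i : ι // 0 < v i 0} × {i : ι // v i 0 < 0}) → ℝ := FME v c

def FMst (v : ι → Fin (n+1) → ℝ) (st : ι → Bool) :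
    {i : ι // v i 0 = 0} ⊕ ({i : ι // 0 < v i 0} × {i : ι // v i 0 < 0}) → Bool :=
  Sum.elim (fun z => st z.1) (fun pq => st pq.1.1 || st pq.2.1)

lemma FMv_dot (v : ι → Fin (n+1) → ℝ)
    (i' : {i : ι // v i 0 = 0} ⊕ ({i : ι // 0 < v i 0} × {i : ι // v i 0 < 0}))
    (z : Fin n → ℝ) :
    FMv v i' ⬝ᵥ z = FME v (fun i => Fin.tail (v i) ⬝ᵥ z) i' := by
  rcases i' with z0 | pq <;>
    simp [FMv, FME, dotProduct, Fin.tail, Finset.mul_sum, Finset.sum_sub_distrib,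
      sub_mul, mul_assoc]

lemma FM_sat (v : ι → Fin (n+1) → ℝ) (c : ι → ℝ) (st : ι → Bool) (z : Fin n → ℝ)
    (hz : ∀ i', if FMst v st i' then FMc v c i' < FMv v i' ⬝ᵥ z
      else FMc v c i' ≤ FMv v i' ⬝ᵥ z) :
    ∃ x : Fin (n+1) → ℝ, ∀ i, if st i then c i < v i ⬝ᵥ x else c i ≤ v i ⬝ᵥ x := by
  obtain ⟨t, hP, hN⟩ := exists_between''
    (P := {i : ι // 0 < v i 0}) (Q := {i : ι // v i 0 < 0})
    (fun p => (c p.1 - Fin.tail (v p.1) ⬝ᵥ z) / v p.1 0)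
    (fun q => (c q.1 - Fin.tail (v q.1) ⬝ᵥ z) / v q.1 0)
    (fun p => st p.1) (fun q => st q.1)
    (by
      intro p q
      have h1 : (0:ℝ) < v p.1 0 := p.2
      have h2 : v q.1 0 < 0 := q.2
      have hthis := hz (Sum.inr (p, q))
      rw [FMv_dot] at hthis
      simp only [FMst, FMc, FME, Sum.elim_inr] at hthis
      have key : (c q.1 - Fin.tail (v q.1) ⬝ᵥ z) / v q.1 0
          - (c p.1 - Fin.tail (v p.1) ⬝ᵥ z) / v p.1 0
          = ((v p.1 0)⁻¹ * (Fin.tail (v p.1) ⬝ᵥ z) - (v q.1 0)⁻¹ * (Fin.tail (v q.1) ⬝ᵥ z))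
            - ((v p.1 0)⁻¹ * c p.1 - (v q.1 0)⁻¹ * c q.1) := by
        field_simp
        ring
      by_cases hb : (st p.1 || st q.1) = true
      · simp only [hb, ↓reduceIte] at hthis
        beta_reduce
        rw [if_pos hb]
        linarith
      · simp only [hb, Bool.false_eq_true, ↓reduceIte] at hthis
        beta_reduce
        rw [if_neg hb]
        linarith)
  refine ⟨Fin.cons t z, fun i => ?_⟩
  have hdot : v i ⬝ᵥ Fin.cons t z = v i 0 * t + Fin.tail (v i) ⬝ᵥ z := by
    simp [dotProduct, Fin.sum_univ_succ, Fin.tail]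
  rcases lt_trichotomy (v i 0) 0 with hn | hz0 | hp
  · have h' := hN ⟨i, hn⟩
    dsimp only at h'
    rw [hdot]
    by_cases hs : st i = true
    · rw [if_pos hs] at h' ⊢
      have := (lt_div_iff_of_neg hn).mp h'
      linarith
    · rw [if_neg hs] at h' ⊢
      have := (le_div_iff_of_neg hn).mp h'
      linarith
  · have h' := hz (Sum.inl ⟨i, hz0⟩)
    rw [FMv_dot] at h'
    simp only [FMst, FMc, FME, Sum.elim_inl] at h'
    rw [hdot, hz0, zero_mul, zero_add]
    exact h'
  · have h' := hP ⟨i, hp⟩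
    dsimp only at h'
    rw [hdot]
    by_cases hs : st i = true
    · rw [if_pos hs] at h' ⊢
      have := (div_lt_iff₀ hp).mp h'
      linarith
    · rw [if_neg hs] at h' ⊢
      have := (div_le_iff₀ hp).mp h'
      linarith

/-- pulled-back multipliers -/
noncomputable def FMY (v : ι → Fin (n+1) → ℝ)
    (y' : ({i : ι // v i 0 = 0} ⊕ ({i : ι // 0 < v i 0} × {i : ι // v i 0 < 0})) → ℝ) :
    ι → ℝ :=
  fun i =>
    (if hz : v i 0 = 0 then y' (Sum.inl ⟨i, hz⟩) else 0)
    + (if hp : 0 < v i 0 then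
        (v i 0)⁻¹ * ∑ q : {j : ι // v j 0 < 0}, y' (Sum.inr (⟨i, hp⟩, q)) else 0)
    + (if hn : v i 0 < 0 then
        (-(v i 0))⁻¹ * ∑ p : {j : ι // 0 < v j 0}, y' (Sum.inr (p, ⟨i, hn⟩)) else 0)

lemma FMY_nonneg (v : ι → Fin (n+1) → ℝ) (y') (hy' : ∀ i', 0 ≤ y' i') (i : ι) :
    0 ≤ FMY v y' i := by
  unfold FMY
  apply add_nonneg
  apply add_nonneg
  · split_ifs with h
    · exact hy' _
    · exact le_rfl
  · split_ifs with h
    · exact mul_nonneg (inv_nonneg.mpr h.le) (Finset.sum_nonneg fun q _ => hy' _)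
    · exact le_rfl
  · split_ifs with h
    · exact mul_nonneg (inv_nonneg.mpr (by linarith)) (Finset.sum_nonneg fun p _ => hy' _)
    · exact le_rfl

lemma FMY_sum (v : ι → Fin (n+1) → ℝ) (y') (G : ι → ℝ) :
    ∑ i, FMY v y' i * G i = ∑ i', y' i' * FME v G i' := by
  calc ∑ i, FMY v y' i * G i
      = ∑ i, ((if hz : v i 0 = 0 then y' (Sum.inl ⟨i, hz⟩) * G i else 0)
        + (if hp : 0 < v i 0 then
            ∑ q : {j : ι // v j 0 < 0}, y' (Sum.inr (⟨i, hp⟩, q)) * ((v i 0)⁻¹ * G i) else 0)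
        + (if hn : v i 0 < 0 then
            ∑ p : {j : ι // 0 < v j 0}, y' (Sum.inr (p, ⟨i, hn⟩)) * (-((v i 0)⁻¹ * G i))
          else 0)) := by
        refine Finset.sum_congr rfl (fun i _ => ?_)
        unfold FMY
        have hin : ∀ x : ℝ, x < 0 → (-x)⁻¹ = -x⁻¹ := fun x _ => by
          rw [inv_neg]
        split_ifs with h1 h2 h3 h2 h3 h3 <;>
          (try rw [hin _ h3]) <;>
          (try rw [← Finset.sum_mul]) <;>
          (try rw [← Finset.sum_mul]) <;> ring
    _ = (∑ z : {i : ι // v i 0 = 0}, y' (Sum.inl z) * G z.1)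
        + ((∑ p : {j : ι // 0 < v j 0}, ∑ q : {j : ι // v j 0 < 0},
            y' (Sum.inr (p, q)) * ((v p.1 0)⁻¹ * G p.1))
        + (∑ q : {j : ι // v j 0 < 0}, ∑ p : {j : ι // 0 < v j 0},
            y' (Sum.inr (p, q)) * (-((v q.1 0)⁻¹ * G q.1)))) := by
        rw [Finset.sum_add_distrib, Finset.sum_add_distrib, add_assoc]
        congr 1
        · exact sum_dite_subtype' (fun i => v i 0 = 0) (fun z => y' (Sum.inl z) * G z.1)
        congr 1
        · exact sum_dite_subtype' (fun i => 0 < v i 0)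
            (fun p => ∑ q : {j : ι // v j 0 < 0},
              y' (Sum.inr (p, q)) * ((v p.1 0)⁻¹ * G p.1))
        · exact sum_dite_subtype' (fun i => v i 0 < 0)
            (fun q => ∑ p : {j : ι // 0 < v j 0},
              y' (Sum.inr (p, q)) * (-((v q.1 0)⁻¹ * G q.1)))
    _ = ∑ i', y' i' * FME v G i' := by
        rw [Fintype.sum_sum_type, Fintype.sum_prod_type]
        simp only [FME, Sum.elim_inl, Sum.elim_inr, mul_sub, mul_neg, mul_add,
          Finset.sum_sub_distrib, sub_eq_add_neg, Finset.sum_neg_distrib,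
          Finset.sum_add_distrib]
        rw [Finset.sum_comm (s := Finset.univ) (t := Finset.univ)
          (f := fun (q : {j : ι // v j 0 < 0}) (p : {j : ι // 0 < v j 0}) =>
            y' (Sum.inr (p, q)) * ((v q.1 0)⁻¹ * G q.1))]

lemma FM_step (v : ι → Fin (n+1) → ℝ) (c : ι → ℝ) (st : ι → Bool)
    (y' : ({i : ι // v i 0 = 0} ⊕ ({i : ι // 0 < v i 0} × {i : ι // v i 0 < 0})) → ℝ)
    (h0 : ∀ i', 0 ≤ y' i')
    (h1 : ∑ i', y' i' • FMv v i' = 0)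
    (h2 : 0 ≤ ∑ i', y' i' * FMc v c i')
    (h3 : 0 < ∑ i', y' i' * FMc v c i' ∨ ∃ i', FMst v st i' = true ∧ 0 < y' i') :
    ∃ y : ι → ℝ, (∀ i, 0 ≤ y i) ∧ (∑ i, y i • v i) = 0 ∧ 0 ≤ ∑ i, y i * c i ∧
      (0 < ∑ i, y i * c i ∨ ∃ i, st i = true ∧ 0 < y i) := by
  have hc : ∑ i, FMY v y' i * c i = ∑ i', y' i' * FMc v c i' := FMY_sum v y' c
  refine ⟨FMY v y', FMY_nonneg v y' h0, ?_, ?_, ?_⟩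
  · funext k
    have hk : (∑ i, FMY v y' i • v i) k = ∑ i, FMY v y' i * v i k := by
      simp [Finset.sum_apply]
    rw [hk]
    show _ = (0 : ℝ)
    cases k using Fin.cases with
    | zero =>
        rw [FMY_sum v y' (fun i => v i 0)]
        have hz : ∀ i', y' i' * FME v (fun i => v i 0) i' = 0 := by
          rintro (z | pq)
          · have : v z.1 0 = 0 := z.2
            simp [FME, this]
          · have hp : v pq.1.1 0 ≠ 0 := ne_of_gt pq.1.2
            have hq : v pq.2.1 0 ≠ 0 := ne_of_lt pq.2.2
            simp [FME, inv_mul_cancel₀ hp, inv_mul_cancel₀ hq]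
        rw [Finset.sum_congr rfl (fun i' _ => hz i')]
        simp
    | succ k =>
        rw [FMY_sum v y' (fun i => v i k.succ)]
        have := congrFun h1 k
        simp only [Finset.sum_apply, Pi.smul_apply, smul_eq_mul, Pi.zero_apply] at this
        exact this
  · rw [hc]; exact h2
  · rcases h3 with h | ⟨i', hst, hpos⟩
    · left; rw [hc]; exact h
    · right
      rcases i' with z | ⟨p, q⟩
      · refine ⟨z.1, hst, ?_⟩
        have hz0 : v z.1 0 = 0 := z.2
        unfold FMY
        rw [dif_pos hz0, dif_neg (by rw [hz0]; exact lt_irrefl 0),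
          dif_neg (by rw [hz0]; exact lt_irrefl 0)]
        simpa [Subtype.coe_eta] using hpos
      · have hsum2 : ∀ i : ι, 0 ≤ FMY v y' i := FMY_nonneg v y' h0
        rcases Bool.or_eq_true_iff.mp hst with hsp | hsq
        · refine ⟨p.1, hsp, ?_⟩
          have hp0 : 0 < v p.1 0 := p.2
          unfold FMY
          rw [dif_neg (ne_of_gt hp0), dif_pos hp0, dif_neg (asymm hp0)]
          have hterm : 0 < (v p.1 0)⁻¹ *
              ∑ q' : {j : ι // v j 0 < 0}, y' (Sum.inr (⟨p.1, hp0⟩, q')) := by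
            apply mul_pos (inv_pos.mpr hp0)
            apply Finset.sum_pos' (fun _ _ => h0 _)
            exact ⟨q, mem_univ q, by rw [Subtype.coe_eta]; exact hpos⟩
          simpa using hterm
        · refine ⟨q.1, hsq, ?_⟩
          have hq0 : v q.1 0 < 0 := q.2
          unfold FMY
          rw [dif_neg (ne_of_lt hq0), dif_neg (asymm hq0), dif_pos hq0]
          have hterm : 0 < (-(v q.1 0))⁻¹ *
              ∑ p' : {j : ι // 0 < v j 0}, y' (Sum.inr (p', ⟨q.1, hq0⟩)) := by
            apply mul_pos (inv_pos.mpr (by linarith))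
            apply Finset.sum_pos' (fun _ _ => h0 _)
            exact ⟨p, mem_univ p, by rw [Subtype.coe_eta]; exact hpos⟩
          simpa using hterm

end FM

theorem motzkin_aux : ∀ (n : ℕ) (ι : Type) [Fintype ι] (v : ι → Fin n → ℝ) (c : ι → ℝ)
    (st : ι → Bool),
    (¬ ∃ x : Fin n → ℝ, ∀ i, if st i then c i < v i ⬝ᵥ x else c i ≤ v i ⬝ᵥ x) →
    ∃ y : ι → ℝ, (∀ i, 0 ≤ y i) ∧ (∑ i, y i • v i) = 0 ∧ 0 ≤ ∑ i, y i * c i ∧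
      (0 < ∑ i, y i * c i ∨ ∃ i, st i = true ∧ 0 < y i) := by
  intro n
  induction n with
  | zero =>
    intro ι _ v c st hinf
    rw [not_exists] at hinf
    have h0 := hinf (fun k => k.elim0)
    rw [not_forall] at h0
    obtain ⟨i, hi⟩ := h0
    have hv : v i ⬝ᵥ (fun k => k.elim0) = 0 := by
      simp [dotProduct]
    rw [hv] at hi
    refine ⟨fun i' => if i' = i then (1:ℝ) else 0, fun i' => by positivity, ?_, ?_, ?_⟩
    · funext k
      exact k.elim0
    all_goals
      have hsum : ∑ i', (if i' = i then (1:ℝ) else 0) * c i' = c i := by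
        rw [Finset.sum_congr rfl (fun i' _ => ite_mul (i' = i) (1:ℝ) 0 (c i'))]
        simp
    · rw [hsum]
      by_cases hs : st i = true
      · rw [if_pos hs] at hi
        exact le_of_not_gt hi
      · rw [if_neg hs] at hi
        exact le_of_lt (lt_of_not_ge hi)
    · rw [hsum]
      by_cases hs : st i = true
      · exact Or.inr ⟨i, hs, by simp⟩
      · rw [if_neg hs] at hi
        exact Or.inl (lt_of_not_ge hi)
  | succ n IH =>
    intro ι _ v c st hinf
    have hinf' : ¬ ∃ z : Fin n → ℝ, ∀ i', if FMst v st i' then FMc v c i' < FMv v i' ⬝ᵥ z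
        else FMc v c i' ≤ FMv v i' ⬝ᵥ z := by
      rintro ⟨z, hz⟩
      exact hinf (FM_sat v c st z hz)
    obtain ⟨y', h0, h1, h2, h3⟩ := IH _ (FMv v) (FMc v c) (FMst v st) hinf'
    exact FM_step v c st y' h0 h1 h2 h3



/-- Corollary of Motzkin's transposition theorem: there is no `x` with
`A *ᵥ x ≥ α` and `B *ᵥ x > β` (componentwise) iff there are nonnegative
multipliers `λᵢ`, `η₀, ηⱼ` such that
`∑ᵢ λᵢ (Aᵢ⬝x − αᵢ) + ∑ⱼ ηⱼ (Bⱼ⬝x − βⱼ) + η₀` vanishes identically in `x`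
and `η₀ + ∑ⱼ ηⱼ > 0`. -/
theorem motzkin_corollary (r s n : ℕ)
    (A : Matrix (Fin r) (Fin n) ℝ) (B : Matrix (Fin s) (Fin n) ℝ)
    (α : Fin r → ℝ) (β : Fin s → ℝ) :
    (¬ ∃ x : Fin n → ℝ, (∀ i, α i ≤ A.mulVec x i) ∧ (∀ j, β j < B.mulVec x j)) ↔
      (∃ (lam : Fin r → ℝ) (η₀ : ℝ) (η : Fin s → ℝ),
        (∀ i, 0 ≤ lam i) ∧ 0 ≤ η₀ ∧ (∀ j, 0 ≤ η j) ∧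
        (∀ x : Fin n → ℝ,
          (∑ i, lam i * (A i ⬝ᵥ x - α i)) + (∑ j, η j * (B j ⬝ᵥ x - β j)) + η₀ = 0) ∧
        0 < η₀ + ∑ j, η j) := by
  constructor
  · intro hinf
    have hinf2 : ¬ ∃ x : Fin n → ℝ, ∀ i : Fin r ⊕ Fin s,
        if (Sum.elim (fun _ => false) (fun _ => true) i : Bool)
        then Sum.elim α β i < Sum.elim (fun i => A i) (fun j => B j) i ⬝ᵥ x
        else Sum.elim α β i ≤ Sum.elim (fun i => A i) (fun j => B j) i ⬝ᵥ x := by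
      rintro ⟨x, hx⟩
      apply hinf
      refine ⟨x, fun i => ?_, fun j => ?_⟩
      · have h := hx (Sum.inl i)
        simpa [Matrix.mulVec] using h
      · have h := hx (Sum.inr j)
        simpa [Matrix.mulVec] using h
    obtain ⟨y, hnn, hsum, hc, halt⟩ := motzkin_aux n (Fin r ⊕ Fin s)
      (Sum.elim (fun i => A i) (fun j => B j)) (Sum.elim α β)
      (Sum.elim (fun _ => false) (fun _ => true)) hinf2
    refine ⟨fun i => y (Sum.inl i), ∑ i, y i * Sum.elim α β i, fun j => y (Sum.inr j),
      fun i => hnn _, hc, fun j => hnn _, ?_, ?_⟩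
    · intro x
      have hdot : ∑ i : Fin r ⊕ Fin s,
          y i * (Sum.elim (fun i => A i) (fun j => B j) i ⬝ᵥ x) = 0 := by
        have hpt : ∀ k, ∑ i : Fin r ⊕ Fin s,
            y i * Sum.elim (fun i => A i) (fun j => B j) i k = 0 := by
          intro k
          have hk := congrFun hsum k
          simpa [Finset.sum_apply] using hk
        calc ∑ i : Fin r ⊕ Fin s, y i * (Sum.elim (fun i => A i) (fun j => B j) i ⬝ᵥ x)
            = ∑ i : Fin r ⊕ Fin s, ∑ k,
                y i * Sum.elim (fun i => A i) (fun j => B j) i k * x k := by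
              refine Finset.sum_congr rfl (fun i _ => ?_)
              rw [dotProduct, Finset.mul_sum]
              exact Finset.sum_congr rfl (fun k _ => by ring)
          _ = ∑ k, ∑ i : Fin r ⊕ Fin s,
                y i * Sum.elim (fun i => A i) (fun j => B j) i k * x k :=
              Finset.sum_comm
          _ = ∑ k, (∑ i : Fin r ⊕ Fin s,
                y i * Sum.elim (fun i => A i) (fun j => B j) i k) * x k := by
              refine Finset.sum_congr rfl (fun k _ => ?_)
              rw [Finset.sum_mul]
          _ = 0 := by
              refine Finset.sum_eq_zero (fun k _ => ?_)
              rw [hpt k, zero_mul]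
      rw [Fintype.sum_sum_type] at hdot
      simp only [Sum.elim_inl, Sum.elim_inr] at hdot
      have hcs : ∑ i, y i * Sum.elim α β i
          = (∑ i, y (Sum.inl i) * α i) + ∑ j, y (Sum.inr j) * β j := by
        rw [Fintype.sum_sum_type]
        simp
      simp only [mul_sub]
      rw [Finset.sum_sub_distrib, Finset.sum_sub_distrib, hcs]
      linarith
    · have hηnn : 0 ≤ ∑ j, y (Sum.inr j) := Finset.sum_nonneg fun j _ => hnn _
      rcases halt with h | ⟨i, hst, hpos⟩
      · linarith
      · rcases i with i | j
        · simp at hst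
        · have : 0 < ∑ j', y (Sum.inr j') :=
            Finset.sum_pos' (fun _ _ => hnn _) ⟨j, mem_univ _, hpos⟩
          linarith
  · rintro ⟨lam, η₀, η, hlam, hη₀, hη, hid, hpos⟩ ⟨x, hA, hB⟩
    have h1 : 0 ≤ ∑ i, lam i * (A i ⬝ᵥ x - α i) :=
      Finset.sum_nonneg fun i _ => mul_nonneg (hlam i) (sub_nonneg.mpr (hA i))
    have h2 : ∀ j, 0 ≤ η j * (B j ⬝ᵥ x - β j) :=
      fun j => mul_nonneg (hη j) (sub_nonneg.mpr (le_of_lt (hB j)))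
    have h2' : 0 ≤ ∑ j, η j * (B j ⬝ᵥ x - β j) := Finset.sum_nonneg fun j _ => h2 j
    have heq := hid x
    have hη₀0 : η₀ = 0 := by linarith
    have hs0 : ∑ j, η j * (B j ⬝ᵥ x - β j) = 0 := by linarith
    have hall := (Finset.sum_eq_zero_iff_of_nonneg (fun j _ => h2 j)).mp hs0
    have hη0 : ∀ j, η j = 0 := by
      intro j
      have hj := hall j (mem_univ j)
      have hd : 0 < B j ⬝ᵥ x - β j := sub_pos.mpr (hB j)
      rcases mul_eq_zero.mp hj with h | h
      · exact h
      · linarith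
    have hsz : ∑ j, η j = 0 := Finset.sum_eq_zero (fun j _ => hη0 j)
    rw [hη₀0, hsz] at hpos
    exact lt_irrefl 0 (by linarith)
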